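/- For every Marshall copula C and all x,y ∈ [0,1] one has |C(x,y) − C(y,x)| ≤ 4/27, and this bound is sharp over the class of Marshall copulas. Moreover, for every (x,y) ∈ [0,1]², the supremum of the set {|C(x,y) − C(y,x)| : C a Marshall copula} equals d*(x,y), where d*(x,y) = x(1−y) if x ≤ y²; d*(x,y) = (x/y)(y−x) if y² ≤ x ≤ y; d*(x,y) = y(1−x) if y ≤ x²; and d*(x,y) = (y/x)(x−y) if x² ≤ y ≤ x. -/

import Mathlib

/-- A Marshall copula: `C(x,y) = min{y·f(x), x·g(y)}` on `[0,1]²` for some nondecreasing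
generators `f, g : [0,1] → [0,1]` with `f(0) = g(0) = 0`, `f(1) = g(1) = 1`, and
`f(x)/x`, `g(x)/x` nonincreasing on `(0,1]`. -/
def IsMarshallCopula (C : ℝ → ℝ → ℝ) : Prop :=
  ∃ f g : ℝ → ℝ,
    (∀ x ∈ Set.Icc (0:ℝ) 1, f x ∈ Set.Icc (0:ℝ) 1) ∧
    (∀ x ∈ Set.Icc (0:ℝ) 1, g x ∈ Set.Icc (0:ℝ) 1) ∧
    MonotoneOn f (Set.Icc 0 1) ∧ MonotoneOn g (Set.Icc 0 1) ∧
    f 0 = 0 ∧ g 0 = 0 ∧ f 1 = 1 ∧ g 1 = 1 ∧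
    AntitoneOn (fun x => f x / x) (Set.Ioc 0 1) ∧
    AntitoneOn (fun x => g x / x) (Set.Ioc 0 1) ∧
    (∀ x ∈ Set.Icc (0:ℝ) 1, ∀ y ∈ Set.Icc (0:ℝ) 1, C x y = min (y * f x) (x * g y))

/-- The maximal asymmetry function `d*` of the family of Marshall copulas. -/
noncomputable def dstarMarshall (x y : ℝ) : ℝ :=
  if x ≤ y then (if x ≤ y ^ 2 then x * (1 - y) else x / y * (y - x))
  else (if y ≤ x ^ 2 then y * (1 - x) else y / x * (x - y))


lemma dstar_symm (x y : ℝ) : dstarMarshall x y = dstarMarshall y x := by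
  unfold dstarMarshall
  rcases lt_trichotomy x y with h | h | h
  · rw [if_pos h.le, if_neg (not_le.2 h)]
  · subst h; simp
  · rw [if_neg (not_le.2 h), if_pos h.le]

lemma dstar_nonneg {x y : ℝ} (hx : 0 ≤ x) (hxy : x ≤ y) (hy : y ≤ 1) :
    0 ≤ dstarMarshall x y := by
  unfold dstarMarshall
  rw [if_pos hxy]
  split_ifs with h
  · nlinarith
  · have hy0 : 0 < y := by nlinarith
    have := sub_nonneg.2 hxy
    positivity

lemma dstar_le {x y : ℝ} (hx : 0 ≤ x) (hxy : x ≤ y) (hy : y ≤ 1) :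
    dstarMarshall x y ≤ 4 / 27 := by
  have hy0 : 0 ≤ y := le_trans hx hxy
  unfold dstarMarshall
  rw [if_pos hxy]
  split_ifs with h
  · nlinarith [mul_nonneg (sq_nonneg (3*y-2)) (by linarith : (0:ℝ) ≤ 3*y+1)]
  · push_neg at h
    have hy0' : 0 < y := by nlinarith
    rw [div_mul_eq_mul_div, div_le_iff₀ hy0']
    rcases le_total y (1/2) with h' | h'
    · nlinarith [sq_nonneg (2*x - y)]
    · nlinarith [mul_nonneg (by nlinarith : (0:ℝ) ≤ x - y^2) (by nlinarith : (0:ℝ) ≤ 2*y^2 - y),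
        mul_nonneg (mul_nonneg hy0'.le (sq_nonneg (3*y-2))) (by linarith : (0:ℝ) ≤ 3*y+1),
        sq_nonneg (x - y^2)]

/-- Core one-sided estimate. -/
lemma core_est {x y fx fy gx gy : ℝ}
    (hx0 : 0 ≤ x) (hxy : x ≤ y) (hy1 : y ≤ 1)
    (hfx0 : 0 ≤ fx) (hfy1 : fy ≤ 1) (hgy1 : gy ≤ 1)
    (hfxx : x ≤ fx) (hfyy : y ≤ fy) (hgxx : x ≤ gx) (hgyy : y ≤ gy)
    (hfmono : fx ≤ fy) (hgant : x * gy ≤ y * gx) :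
    min (y * fx) (x * gy) - min (x * fy) (y * gx) ≤ dstarMarshall x y := by
  have hy0 : 0 ≤ y := le_trans hx0 hxy
  have hlow : x * y ≤ min (x * fy) (y * gx) := by
    apply le_min <;> nlinarith
  unfold dstarMarshall
  rw [if_pos hxy]
  split_ifs with h
  · -- x ≤ y²
    have : min (y * fx) (x * gy) ≤ x := le_trans (min_le_right _ _) (by nlinarith)
    nlinarith
  · push_neg at h
    have hy0' : 0 < y := by nlinarith
    rcases le_total (y * fx) x with hc | hc
    · -- fx ≤ x/y
      have h1 : min (y * fx) (x * gy) ≤ y * fx := min_le_left _ _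
      rcases le_total (x * fx) (x * gy) with h2 | h2
      · have h3 : min (x * fy) (y * gx) ≥ x * fx := by
          apply le_min
          · nlinarith
          · nlinarith
        have : y * fx - x * fx ≤ x / y * (y - x) := by
          rw [div_mul_eq_mul_div, le_div_iff₀ hy0']
          nlinarith [mul_le_mul_of_nonneg_left hc hx0,
            mul_le_mul_of_nonneg_left (mul_le_mul_of_nonneg_left hfmono hy0) hx0,
            mul_nonneg hx0 hy0]
        linarith
      · have h4 : min (y * fx) (x * gy) ≤ x * gy := min_le_right _ _
        have h5 : min (x * fy) (y * gx) ≥ x * gy := by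
          apply le_min
          · nlinarith
          · nlinarith
        have : 0 ≤ x / y * (y - x) :=
          mul_nonneg (div_nonneg hx0 hy0) (sub_nonneg.2 hxy)
        linarith
    · -- x < y * fx, i.e. x/y < fx
      have h1 : min (y * fx) (x * gy) ≤ x * gy := min_le_right _ _
      rcases le_total (x * gy) (x * fy) with h2 | h2
      · have h5 : min (x * fy) (y * gx) ≥ x * gy := le_min h2 hgant
        have : 0 ≤ x / y * (y - x) :=
          mul_nonneg (div_nonneg hx0 hy0) (sub_nonneg.2 hxy)
        linarith
      · have h5 : min (x * fy) (y * gx) ≥ x * fy := by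
          apply le_min le_rfl
          nlinarith
        have : x * gy - x * fy ≤ x / y * (y - x) := by
          rw [div_mul_eq_mul_div, le_div_iff₀ hy0']
          nlinarith [mul_le_mul_of_nonneg_left hc hx0,
            mul_le_mul_of_nonneg_left (mul_le_mul_of_nonneg_left hfmono hy0) hx0,
            mul_nonneg hx0 hy0]
        linarith

lemma gen_ge_id {f : ℝ → ℝ} (hf0 : f 0 = 0) (hf1 : f 1 = 1)
    (hfa : AntitoneOn (fun x => f x / x) (Set.Ioc 0 1)) :
    ∀ t ∈ Set.Icc (0:ℝ) 1, t ≤ f t := by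
  intro t ht
  rcases eq_or_lt_of_le ht.1 with h | h
  · rw [← h, hf0]
  · have := hfa ⟨h, ht.2⟩ ⟨zero_lt_one, le_rfl⟩ ht.2
    simp only [hf1, div_one] at this
    rw [le_div_iff₀ h] at this
    linarith [this]

lemma gen_cross {g : ℝ → ℝ} {x y : ℝ} (hg0 : g 0 = 0) (hgx : 0 ≤ g x)
    (hga : AntitoneOn (fun x => g x / x) (Set.Ioc 0 1))
    (hx0 : 0 ≤ x) (hxy : x ≤ y) (hy1 : y ≤ 1) :
    x * g y ≤ y * g x := by
  rcases eq_or_lt_of_le hx0 with h | h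
  · rw [← h, hg0]; simp
  · have hy0 : 0 < y := lt_of_lt_of_le h hxy
    have := hga ⟨h, le_trans hxy hy1⟩ ⟨hy0, hy1⟩ hxy
    rw [div_le_div_iff₀ hy0 h] at this
    linarith

lemma abs_le_dstar {C : ℝ → ℝ → ℝ} (hC : IsMarshallCopula C)
    {x y : ℝ} (hx : x ∈ Set.Icc (0:ℝ) 1) (hy : y ∈ Set.Icc (0:ℝ) 1) :
    |C x y - C y x| ≤ dstarMarshall x y := by
  obtain ⟨f, g, hfr, hgr, hfm, hgm, hf0, hg0, hf1, hg1, hfa, hga, hCeq⟩ := hC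
  have key : ∀ a b : ℝ, a ∈ Set.Icc (0:ℝ) 1 → b ∈ Set.Icc (0:ℝ) 1 → a ≤ b →
      |C a b - C b a| ≤ dstarMarshall a b := by
    intro a b ha hb hab
    rw [hCeq a ha b hb, hCeq b hb a ha, abs_sub_le_iff]
    constructor
    · exact core_est ha.1 hab hb.2 (hfr a ha).1 (hfr b hb).2 (hgr b hb).2
        (gen_ge_id hf0 hf1 hfa a ha) (gen_ge_id hf0 hf1 hfa b hb)
        (gen_ge_id hg0 hg1 hga a ha) (gen_ge_id hg0 hg1 hga b hb)
        (hfm ha hb hab)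
        (gen_cross hg0 (hgr a ha).1 hga ha.1 hab hb.2)
    · rw [min_comm (a * f b), min_comm (b * f a)]
      exact core_est ha.1 hab hb.2 (hgr a ha).1 (hgr b hb).2 (hfr b hb).2
        (gen_ge_id hg0 hg1 hga a ha) (gen_ge_id hg0 hg1 hga b hb)
        (gen_ge_id hf0 hf1 hfa a ha) (gen_ge_id hf0 hf1 hfa b hb)
        (hgm ha hb hab)
        (gen_cross hf0 (hfr a ha).1 hfa ha.1 hab hb.2)
  rcases le_total x y with h | h
  · exact key x y hx hy h
  · rw [abs_sub_comm, dstar_symm]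
    exact key y x hy hx h

noncomputable def Ffun (y c t : ℝ) : ℝ := min (max t c) (t / y)
noncomputable def Gfun (y t : ℝ) : ℝ := min (t / y) 1
noncomputable def Cgen (f g : ℝ → ℝ) (u v : ℝ) : ℝ := min (v * f u) (u * g v)

lemma cross_aux {a b c : ℝ} (ha : 0 ≤ a) (hab : a ≤ b) : max b c * a ≤ max a c * b := by
  rcases le_total c a with h | h
  · rcases le_total c b with h' | h'
    · rw [max_eq_left h, max_eq_left h']; nlinarith
    · rw [max_eq_right h', max_eq_left h]; nlinarith
  · rcases le_total c b with h' | h'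
    · rw [max_eq_left h', max_eq_right h]; nlinarith
    · rw [max_eq_right h, max_eq_right h']; nlinarith

lemma marshall_FG {y c : ℝ} (hy0 : 0 < y) (hy1 : y ≤ 1) (hc0 : 0 ≤ c) (hc1 : c ≤ 1) :
    IsMarshallCopula (Cgen (Ffun y c) (Gfun y)) := by
  have hdm : Monotone fun t : ℝ => t / y := monotone_id.div_const hy0.le
  have h1y : (1:ℝ) ≤ 1 / y := by rw [le_div_iff₀ hy0]; linarith
  refine ⟨Ffun y c, Gfun y, ?_, ?_, ?_, ?_, ?_, ?_, ?_, ?_, ?_, ?_, ?_⟩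
  · intro t ht
    exact ⟨le_min (le_trans ht.1 (le_max_left _ _)) (div_nonneg ht.1 hy0.le),
      le_trans (min_le_left _ _) (max_le ht.2 hc1)⟩
  · intro t ht
    exact ⟨le_min (div_nonneg ht.1 hy0.le) zero_le_one, min_le_right _ _⟩
  · exact (((monotone_id.max monotone_const)).min hdm).monotoneOn _
  · exact (hdm.min monotone_const).monotoneOn _
  · show min (max 0 c) (0 / y) = 0
    rw [zero_div, max_eq_right hc0, min_eq_right hc0]
  · show min (0 / y) 1 = 0
    rw [zero_div]; exact min_eq_left zero_le_one
  · show min (max 1 c) (1 / y) = 1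
    rw [max_eq_left hc1, min_eq_left h1y]
  · show min (1 / y) 1 = 1
    exact min_eq_right h1y
  · intro a ha b hb hab
    show Ffun y c b / b ≤ Ffun y c a / a
    rw [div_le_div_iff₀ hb.1 ha.1]
    unfold Ffun
    rw [min_mul_of_nonneg _ _ ha.1.le, min_mul_of_nonneg _ _ hb.1.le]
    apply le_min
    · exact le_trans (min_le_left _ _) (cross_aux ha.1.le hab)
    · refine le_trans (min_le_right _ _) (le_of_eq ?_)
      ring
  · intro a ha b hb hab
    show Gfun y b / b ≤ Gfun y a / a
    rw [div_le_div_iff₀ hb.1 ha.1]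
    unfold Gfun
    rw [min_mul_of_nonneg _ _ ha.1.le, min_mul_of_nonneg _ _ hb.1.le]
    apply le_min
    · refine le_trans (min_le_left _ _) (le_of_eq ?_); ring
    · exact le_trans (min_le_right _ _) (by nlinarith)
  · intro u _ v _; rfl

lemma caseA {x y : ℝ} (hx0 : 0 ≤ x) (hxy2 : x ≤ y ^ 2) (hy0 : 0 < y) (hy1 : y ≤ 1) :
    ∃ C, IsMarshallCopula C ∧ C x y - C y x = x * (1 - y) := by
  have hxy : x ≤ y := le_trans hxy2 (by nlinarith)
  refine ⟨Cgen (Ffun y y) (Gfun y), marshall_FG hy0 hy1 hy0.le hy1, ?_⟩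
  have hfx : Ffun y y x = x / y := by
    unfold Ffun
    rw [max_eq_right hxy, min_eq_right (by rw [div_le_iff₀ hy0]; nlinarith)]
  have hfy : Ffun y y y = y := by
    unfold Ffun
    rw [max_self, min_eq_left (by rw [le_div_iff₀ hy0]; nlinarith)]
  have hgy : Gfun y y = 1 := by
    unfold Gfun
    rw [div_self hy0.ne', min_self]
  have hgx : Gfun y x = x / y := by
    unfold Gfun
    rw [min_eq_left (by rw [div_le_one hy0]; exact hxy)]
  show min (y * Ffun y y x) (x * Gfun y y) - min (x * Ffun y y y) (y * Gfun y x) = _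
  have e : y * (x / y) = x := by field_simp
  rw [hfx, hfy, hgy, hgx, e, mul_one, min_self, min_eq_left (by nlinarith : x * y ≤ x)]
  ring

lemma caseB {x y : ℝ} (hy2x : y ^ 2 ≤ x) (hxy : x ≤ y) (hy0 : 0 < y) (hy1 : y ≤ 1) :
    ∃ C, IsMarshallCopula C ∧ C x y - C y x = x / y * (y - x) := by
  have hx0 : 0 ≤ x := le_trans (sq_nonneg y) hy2x
  have hc1 : x / y ≤ 1 := by rw [div_le_one hy0]; exact hxy
  refine ⟨Cgen (Ffun y (x/y)) (Gfun y), marshall_FG hy0 hy1 (by positivity) hc1, ?_⟩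
  have hxxy : x ≤ x / y := by rw [le_div_iff₀ hy0]; nlinarith
  have hyxy : y ≤ x / y := by rw [le_div_iff₀ hy0]; nlinarith
  have hfx : Ffun y (x/y) x = x / y := by
    unfold Ffun
    rw [max_eq_right hxxy, min_self]
  have hfy : Ffun y (x/y) y = x / y := by
    unfold Ffun
    rw [max_eq_right hyxy, div_self hy0.ne', min_eq_left hc1]
  have hgy : Gfun y y = 1 := by
    unfold Gfun
    rw [div_self hy0.ne', min_self]
  have hgx : Gfun y x = x / y := by
    unfold Gfun
    rw [min_eq_left hc1]
  show min (y * Ffun y (x/y) x) (x * Gfun y y) - min (x * Ffun y (x/y) y) (y * Gfun y x) = _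
  have e : y * (x / y) = x := by field_simp
  rw [hfx, hfy, hgy, hgx, e, mul_one, min_self,
    min_eq_left (by nlinarith [mul_le_mul_of_nonneg_left hc1 hx0] : x * (x / y) ≤ x)]
  field_simp

lemma identity_marshall : IsMarshallCopula (Cgen id id) := by
  refine ⟨id, id, ?_, ?_, monotone_id.monotoneOn _, monotone_id.monotoneOn _,
    rfl, rfl, rfl, rfl, ?_, ?_, fun u _ v _ => rfl⟩
  · exact fun t ht => ht
  · exact fun t ht => ht
  all_goals
    intro a ha b hb hab
    show b / b ≤ a / a
    rw [div_self ha.1.ne', div_self hb.1.ne']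

lemma mem_witness {x y : ℝ} (hx : x ∈ Set.Icc (0:ℝ) 1) (hy : y ∈ Set.Icc (0:ℝ) 1)
    (hxy : x ≤ y) :
    ∃ C, IsMarshallCopula C ∧ |C x y - C y x| = dstarMarshall x y := by
  by_cases h : x ≤ y ^ 2
  · rcases eq_or_lt_of_le (le_trans hx.1 hxy) with hy0 | hy0
    · -- y = 0, hence x = 0
      have hx0 : x = 0 := le_antisymm (hy0 ▸ hxy) hx.1
      refine ⟨Cgen id id, identity_marshall, ?_⟩
      rw [hx0, ← hy0]
      simp [dstarMarshall]
    · obtain ⟨C, hC, hval⟩ := caseA hx.1 h hy0 hy.2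
      refine ⟨C, hC, ?_⟩
      rw [hval, abs_of_nonneg (by nlinarith [hx.1, hy.2] : (0:ℝ) ≤ x * (1 - y))]
      unfold dstarMarshall
      rw [if_pos hxy, if_pos h]
  · push_neg at h
    have hy0 : 0 < y := by
      rcases eq_or_lt_of_le (le_trans hx.1 hxy) with hy0 | hy0
      · exfalso; nlinarith [hx.1]
      · exact hy0
    obtain ⟨C, hC, hval⟩ := caseB h.le hxy hy0 hy.2
    refine ⟨C, hC, ?_⟩
    rw [hval, abs_of_nonneg (mul_nonneg (div_nonneg hx.1 hy0.le) (sub_nonneg.2 hxy))]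
    unfold dstarMarshall
    rw [if_pos hxy, if_neg (not_le.2 h)]


/-- Theorem 4.4: every Marshall copula satisfies
`|C(x,y) − C(y,x)| ≤ 4/27`, the bound is sharp, and the maximal asymmetry function
of the family of Marshall copulas equals `d*`. -/
theorem marshall_maximal_asymmetry :
    (∀ C : ℝ → ℝ → ℝ, IsMarshallCopula C →
      ∀ x ∈ Set.Icc (0:ℝ) 1, ∀ y ∈ Set.Icc (0:ℝ) 1, |C x y - C y x| ≤ 4 / 27) ∧
    (∃ C : ℝ → ℝ → ℝ, IsMarshallCopula C ∧
      ∃ x ∈ Set.Icc (0:ℝ) 1, ∃ y ∈ Set.Icc (0:ℝ) 1, |C x y - C y x| = 4 / 27) ∧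
    (∀ x ∈ Set.Icc (0:ℝ) 1, ∀ y ∈ Set.Icc (0:ℝ) 1,
      IsLUB {d : ℝ | ∃ C : ℝ → ℝ → ℝ, IsMarshallCopula C ∧ d = |C x y - C y x|}
        (dstarMarshall x y)) := by
  have hle : ∀ x ∈ Set.Icc (0:ℝ) 1, ∀ y ∈ Set.Icc (0:ℝ) 1, dstarMarshall x y ≤ 4/27 := by
    intro x hx y hy
    rcases le_total x y with h | h
    · exact dstar_le hx.1 h hy.2
    · rw [dstar_symm]; exact dstar_le hy.1 h hx.2
  refine ⟨?_, ?_, ?_⟩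
  · intro C hC x hx y hy
    exact le_trans (abs_le_dstar hC hx hy) (hle x hx y hy)
  · have h49 : (4/9 : ℝ) ∈ Set.Icc (0:ℝ) 1 := by norm_num
    have h23 : (2/3 : ℝ) ∈ Set.Icc (0:ℝ) 1 := by norm_num
    obtain ⟨C, hC, hval⟩ := caseA (x := 4/9) (y := 2/3) (by norm_num) (by norm_num)
      (by norm_num) (by norm_num)
    exact ⟨C, hC, 4/9, h49, 2/3, h23, by rw [hval]; norm_num⟩
  · intro x hx y hy
    apply IsGreatest.isLUB
    constructor
    · rcases le_total x y with h | h
      · obtain ⟨C, hC, hval⟩ := mem_witness hx hy h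
        exact ⟨C, hC, hval.symm⟩
      · obtain ⟨C, hC, hval⟩ := mem_witness hy hx h
        refine ⟨C, hC, ?_⟩
        rw [abs_sub_comm, hval, dstar_symm]
    · rintro d ⟨C, hC, rfl⟩
      exact abs_le_dstar hC hx hy
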